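/- Let p be an odd prime and d a positive integer such that p−1 divides d, and let x ∈ ℚ_p. Then (a^d − 1)·x lies in ℤ_p for every unit a ∈ ℤ_pˣ if and only if p^(1+v_p(d))·x lies in ℤ_p. (Equivalently: the subgroup of (ℤ_pˣ)^d-invariants of ℚ_p/ℤ_p, i.e. the elements killed by multiplication by a^d − 1 for all a ∈ ℤ_pˣ, is exactly the p^(1+v_p(d))-torsion subgroup; this is the identification of (ℚ_p/ℤ_p)^((ℤ_pˣ)^d) in the proof of Lemma 3.1.) -/

import Mathlib

section helpers

variable {p : ℕ} [hp : Fact p.Prime]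

lemma aux_natCast_dvd_iff (n : ℕ) : (p : ℤ_[p]) ∣ (n : ℤ_[p]) ↔ p ∣ n := by
  rw [← PadicInt.norm_lt_one_iff_dvd]
  have h := PadicInt.norm_int_lt_one_iff_dvd (p := p) (n : ℤ)
  push_cast at h
  rw [h, Int.natCast_dvd_natCast]

lemma aux_dvd_iff (z : ℤ_[p]) : (p : ℤ_[p]) ∣ z ↔ PadicInt.toZMod z = 0 := by
  rw [← Ideal.mem_span_singleton, ← PadicInt.maximalIdeal_eq_span_p,
    ← PadicInt.ker_toZMod, RingHom.mem_ker]

lemma aux_unit_pow (a : ℤ_[p]ˣ) : (p : ℤ_[p]) ∣ (a : ℤ_[p]) ^ (p - 1) - 1 := by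
  rw [aux_dvd_iff]
  have ha : IsUnit (PadicInt.toZMod ((a : ℤ_[p]))) := a.isUnit.map _
  rw [map_sub, map_pow, map_one, sub_eq_zero]
  exact ZMod.pow_card_sub_one_eq_one ha.ne_zero

lemma aux_not_dvd_sub_one : ¬ p ∣ p - 1 := by
  intro h
  have h1 : 0 < p - 1 := by have := hp.out.two_le; omega
  have := Nat.le_of_dvd h1 h
  omega

lemma aux_isUnit_of_not_dvd {w : ℤ_[p]} (h : ¬ (p : ℤ_[p]) ∣ w) : IsUnit w := by
  by_contra hc
  exact h ((PadicInt.norm_lt_one_iff_dvd w).mp (PadicInt.not_isUnit_iff.mp hc))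

/-- lower bound: for b ≡ 1 mod p, b not div by p, p^(1+v_p(m)) ∣ b^m - 1 -/
lemma aux_lower (hodd : Odd p) {b : ℤ_[p]} (hb : (p : ℤ_[p]) ∣ b - 1)
    (hbu : ¬ (p : ℤ_[p]) ∣ b) {m : ℕ} (hm : m ≠ 0) :
    (p : ℤ_[p]) ^ (1 + padicValNat p m) ∣ b ^ m - 1 := by
  set v := padicValNat p m with hv
  set m' := m / p ^ v with hm'
  have hsplit : p ^ v * m' = m := by
    rw [hm', hv, ← Nat.factorization_def m hp.out]
    exact Nat.ordProj_mul_ordCompl_eq_self m p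
  have hmd : ¬ p ∣ m' := by
    rw [hm', hv, ← Nat.factorization_def m hp.out]
    exact Nat.not_dvd_ordCompl hp.out hm
  set c := b ^ m' with hc
  have hc1 : (p : ℤ_[p]) ∣ c - 1 :=
    hb.trans (by simpa using sub_dvd_pow_sub_pow b 1 m')
  have hcu : ¬ (p : ℤ_[p]) ∣ c := fun h => hbu (PadicInt.prime_p.dvd_of_dvd_pow h)
  have hbm : b ^ m = c ^ (p ^ v) := by
    rw [hc, ← pow_mul, mul_comm, hsplit]
  by_cases h0 : b ^ m - 1 = 0
  · rw [h0]; exact dvd_zero _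
  have hE : emultiplicity (p : ℤ_[p]) (b ^ m - 1) =
      emultiplicity (p : ℤ_[p]) (c - 1) + v := by
    have h := emultiplicity_pow_prime_pow_sub_pow_prime_pow (x := c) (y := 1)
      PadicInt.prime_p hodd (by simpa using hc1) hcu v
    simpa [hbm] using h
  have h1 : (1 : ℕ∞) ≤ emultiplicity (p : ℤ_[p]) (c - 1) :=
    le_emultiplicity_of_pow_dvd (by simpa using hc1)
  have hle : ((1 + v : ℕ) : ℕ∞) ≤ emultiplicity (p : ℤ_[p]) (b ^ m - 1) := by
    rw [hE]
    push_cast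
    exact add_le_add_left h1 _
  exact pow_dvd_of_le_emultiplicity hle

lemma aux_val_eq (hodd : Odd p) {d m : ℕ} (hd : 0 < d) (hm : d = (p - 1) * m) :
    padicValNat p d = padicValNat p m := by
  have h1 : p - 1 ≠ 0 := by have := hp.out.two_le; omega
  have h2 : m ≠ 0 := by rintro rfl; omega
  rw [hm, padicValNat.mul h1 h2, padicValNat.eq_zero_of_not_dvd aux_not_dvd_sub_one, zero_add]

lemma aux_key_dvd (hodd : Odd p) {d : ℕ} (hd : 0 < d) (hdvd : (p - 1) ∣ d) (a : ℤ_[p]ˣ) :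
    (p : ℤ_[p]) ^ (1 + padicValNat p d) ∣ (a : ℤ_[p]) ^ d - 1 := by
  obtain ⟨m, hm⟩ := hdvd
  have hm0 : m ≠ 0 := by rintro rfl; omega
  rw [aux_val_eq hodd hd hm, hm, pow_mul]
  have hbu : ¬ (p : ℤ_[p]) ∣ (a : ℤ_[p]) ^ (p - 1) := by
    intro h
    have : (p : ℤ_[p]) ∣ (a : ℤ_[p]) := PadicInt.prime_p.dvd_of_dvd_pow h
    exact PadicInt.prime_p.not_dvd_one (this.trans a.isUnit.dvd)
  exact aux_lower hodd (aux_unit_pow a) hbu hm0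

/-- exact valuation for 1 + p -/
lemma aux_key_exact (hodd : Odd p) {d : ℕ} (hd : 0 < d) :
    ∃ w : ℤ_[p]ˣ, ((1 : ℤ_[p]) + p) ^ d - 1 =
      (p : ℤ_[p]) ^ (1 + padicValNat p d) * (w : ℤ_[p]) := by
  set v := padicValNat p d with hv
  set d' := d / p ^ v with hd'
  have hsplit : p ^ v * d' = d := by
    rw [hd', hv, ← Nat.factorization_def d hp.out]
    exact Nat.ordProj_mul_ordCompl_eq_self d p
  have hdd : ¬ p ∣ d' := by
    rw [hd', hv, ← Nat.factorization_def d hp.out]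
    exact Nat.not_dvd_ordCompl hp.out hd.ne'
  set b : ℤ_[p] := 1 + p with hb
  have hb1 : b - 1 = (p : ℤ_[p]) := by rw [hb]; ring
  have hbnd : ¬ (p : ℤ_[p]) ∣ b := by
    intro h
    have : (p : ℤ_[p]) ∣ 1 := (dvd_add_right (dvd_refl _)).mp (by rwa [hb, add_comm] at h)
    exact PadicInt.prime_p.not_dvd_one this
  have hbd : (p : ℤ_[p]) ∣ b - 1 := hb1 ▸ dvd_refl _
  have hc1 : (p : ℤ_[p]) ∣ b ^ d' - 1 := hbd.trans (by simpa using sub_dvd_pow_sub_pow b 1 d')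
  have hcu : ¬ (p : ℤ_[p]) ∣ b ^ d' := fun h => hbnd (PadicInt.prime_p.dvd_of_dvd_pow h)
  have hE1 : emultiplicity (p : ℤ_[p]) (b ^ d - 1) =
      emultiplicity (p : ℤ_[p]) (b ^ d' - 1) + v := by
    have h := emultiplicity_pow_prime_pow_sub_pow_prime_pow (x := b ^ d') (y := 1)
      PadicInt.prime_p hodd (by simpa using hc1) hcu v
    have hbd2 : b ^ d = (b ^ d') ^ (p ^ v) := by rw [← pow_mul, mul_comm, hsplit]
    simpa [hbd2] using h
  have hE2 : emultiplicity (p : ℤ_[p]) (b ^ d' - 1) = emultiplicity (p : ℤ_[p]) (b - 1) := by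
    have h := emultiplicity_pow_sub_pow_of_prime (p := ((p : ℕ) : ℤ_[p])) PadicInt.prime_p
      (x := b) (y := 1) (by simpa using hbd) hbnd (n := d') (by
        intro hh
        exact hdd ((aux_natCast_dvd_iff d').mp hh))
    simpa using h
  have hEp : emultiplicity ((p : ℕ) : ℤ_[p]) ((p : ℕ) : ℤ_[p]) = 1 := by
    rw [← Nat.cast_one]
    refine emultiplicity_eq_coe.2 ⟨by simp, ?_⟩
    rintro ⟨t, ht⟩
    have h1 : ((p : ℕ) : ℤ_[p]) * 1 = ((p : ℕ) : ℤ_[p]) * (p * t) := by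
      rw [mul_one]
      nth_rewrite 1 [ht]
      ring
    have h2 := mul_left_cancel₀ (PadicInt.prime_p (p := p)).ne_zero h1
    exact PadicInt.prime_p.not_dvd_one ⟨t, h2⟩
  have hE : emultiplicity ((p : ℕ) : ℤ_[p]) (b ^ d - 1) = ((1 + v : ℕ) : ℕ∞) := by
    rw [hE1, hE2, hb1, hEp]
    push_cast
    ring
  obtain ⟨h1, h2⟩ := emultiplicity_eq_coe.mp hE
  obtain ⟨w, hw⟩ := h1
  have hnw : ¬ (p : ℤ_[p]) ∣ w := by
    rintro ⟨t, ht⟩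
    refine h2 ⟨t, ?_⟩
    rw [hw, ht, pow_succ]
    ring
  obtain ⟨u, hu⟩ := aux_isUnit_of_not_dvd hnw
  exact ⟨u, by rw [hw, hu]⟩

end helpers

theorem stmt_4 (p : ℕ) (hp : Fact p.Prime) (hodd : Odd p) (d : ℕ) (hd : 0 < d)
    (hdvd : (p - 1) ∣ d) (x : ℚ_[p]) :
    (∀ a : ℤ_[p]ˣ, ∃ y : ℤ_[p],
      ((((a : ℤ_[p]) ^ d - 1 : ℤ_[p]) : ℚ_[p]) * x = (y : ℚ_[p]))) ↔
    ∃ y : ℤ_[p], (p : ℚ_[p]) ^ (1 + padicValNat p d) * x = (y : ℚ_[p]) := by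
  constructor
  · intro h
    have hund : ¬ (p : ℤ_[p]) ∣ ((1 : ℤ_[p]) + p) := by
      intro hh
      exact PadicInt.prime_p.not_dvd_one
        ((dvd_add_right (dvd_refl _)).mp (by rwa [add_comm] at hh))
    obtain ⟨u, hu⟩ := aux_isUnit_of_not_dvd hund
    obtain ⟨y, hy⟩ := h u
    obtain ⟨w, hw⟩ := aux_key_exact (p := p) hodd hd
    rw [hu, hw] at hy
    push_cast at hy
    refine ⟨(↑(w⁻¹) : ℤ_[p]) * y, ?_⟩
    push_cast
    have hww : ((↑(w⁻¹) : ℤ_[p]) : ℚ_[p]) * ((w : ℤ_[p]) : ℚ_[p]) = 1 := by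
      rw [← PadicInt.coe_mul]
      norm_cast
      simp
    calc (p : ℚ_[p]) ^ (1 + padicValNat p d) * x
        = (((↑(w⁻¹) : ℤ_[p]) : ℚ_[p]) * ((w : ℤ_[p]) : ℚ_[p])) *
            ((p : ℚ_[p]) ^ (1 + padicValNat p d) * x) := by rw [hww, one_mul]
      _ = ((↑(w⁻¹) : ℤ_[p]) : ℚ_[p]) *
            ((p : ℚ_[p]) ^ (1 + padicValNat p d) * ((w : ℤ_[p]) : ℚ_[p]) * x) := by ring
      _ = ((↑(w⁻¹) : ℤ_[p]) : ℚ_[p]) * (y : ℚ_[p]) := by rw [hy]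
  · rintro ⟨y, hy⟩ a
    obtain ⟨c, hc⟩ := aux_key_dvd (p := p) hodd hd hdvd a
    refine ⟨c * y, ?_⟩
    rw [hc]
    push_cast
    rw [← hy]
    ring
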